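/- Let H be a normal subgroup of a finite group K with K/H cyclic, and let V be an irreducible complex representation of H whose character is K-invariant (i.e., χ(k⁻¹hk) = χ(h) for all k ∈ K, h ∈ H). Then V extends to a representation of K, i.e., there exists a K-representation W with res_H W ≅ V. -/

import Mathlib

set_option linter.unusedSectionVars false

open LinearMap

section ExtensionAux

variable {V : Type} [AddCommGroup V] [Module ℂ V] [FiniteDimensional ℂ V]

lemma myTrace_eq_sum_coord {ι : Type} [Fintype ι] [DecidableEq ι] (b : Module.Basis ι ℂ V)
    (f : V →ₗ[ℂ] V) : trace ℂ V f = ∑ i, b.coord i (f (b i)) := by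
  rw [trace_eq_matrix_trace ℂ b f]
  simp [Matrix.trace, LinearMap.toMatrix_apply, Matrix.diag, Module.Basis.coord_apply]

lemma mySchur {G : Type} [Group G] (ρ : Representation ℂ G V)
    (hirr : Nontrivial V ∧
      ∀ p : Submodule ℂ V, (∀ (h : G), ∀ v ∈ p, ρ h v ∈ p) → p = ⊥ ∨ p = ⊤)
    (S : V →ₗ[ℂ] V) (hS : ∀ g : G, S * ρ g = ρ g * S) :
    ∃ c : ℂ, S = c • (1 : V →ₗ[ℂ] V) := by
  haveI := hirr.1
  obtain ⟨c, hc⟩ := Module.End.exists_eigenvalue S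
  refine ⟨c, ?_⟩
  have hinvp : ∀ g : G, ∀ v ∈ Module.End.eigenspace S c, ρ g v ∈ Module.End.eigenspace S c := by
    intro g v hv
    rw [Module.End.mem_eigenspace_iff] at hv ⊢
    have := LinearMap.congr_fun (hS g) v
    simp only [Module.End.mul_apply] at this
    rw [this, hv, map_smul]
  rcases hirr.2 _ hinvp with h | h
  · exact absurd h hc
  · ext v
    have : v ∈ Module.End.eigenspace S c := h ▸ Submodule.mem_top
    rw [Module.End.mem_eigenspace_iff] at this
    simpa using this

lemma myIntertwine {G : Type} [Group G] [Fintype G] (ρ ρ' : Representation ℂ G V)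
    (f : V →ₗ[ℂ] V) (g : G) :
    ρ' g * (∑ h : G, ρ' h⁻¹ * f * ρ h) = (∑ h : G, ρ' h⁻¹ * f * ρ h) * ρ g := by
  rw [Finset.mul_sum, Finset.sum_mul]
  apply Fintype.sum_equiv (Equiv.mulRight g⁻¹)
  intro h
  simp only [Equiv.coe_mulRight, mul_inv_rev, inv_inv, map_mul]
  simp only [mul_assoc]
  congr 2
  simp only [← mul_assoc, ← map_mul, inv_mul_cancel, map_one]
  simp [mul_assoc, ← map_mul]

lemma mySumCoord {G : Type} [Group G] [Fintype G] (ρ ρ' : Representation ℂ G V)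
    {ι : Type} [Fintype ι] [DecidableEq ι] (b : Module.Basis ι ℂ V) :
    ∑ i, ∑ j, b.coord i ((∑ g : G, ρ' g⁻¹ * (b.coord j).smulRight (b i) * ρ g) (b j))
      = ∑ g : G, trace ℂ V (ρ' g⁻¹) * trace ℂ V (ρ g) := by
  have h1 : ∀ i j, b.coord i ((∑ g : G, ρ' g⁻¹ * (b.coord j).smulRight (b i) * ρ g) (b j))
      = ∑ g : G, b.coord i (ρ' g⁻¹ (b i)) * b.coord j (ρ g (b j)) := by
    intro i j
    rw [LinearMap.sum_apply, map_sum]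
    refine Finset.sum_congr rfl fun g _ => ?_
    simp [Module.End.mul_apply, LinearMap.smulRight_apply, map_smul, smul_eq_mul, mul_comm]
  simp_rw [h1]
  rw [Finset.sum_comm]
  rw [show ∀ (F : ι → G → ℂ), (∑ j, ∑ i, ∑ g, F i g * b.coord j (ρ g (b j)))
    = ∑ g : G, (∑ i, F i g) * (∑ j, b.coord j (ρ g (b j))) from ?_]
  · refine Finset.sum_congr rfl fun g _ => ?_
    rw [myTrace_eq_sum_coord b (ρ' g⁻¹), myTrace_eq_sum_coord b (ρ g)]
  · intro F
    have h2 : ∀ i, (∑ j, ∑ g : G, F i g * b.coord j (ρ g (b j)))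
        = ∑ g : G, ∑ j, F i g * b.coord j (ρ g (b j)) := fun i => Finset.sum_comm
    rw [Finset.sum_comm]
    simp_rw [h2]
    rw [Finset.sum_comm]
    refine Finset.sum_congr rfl fun g _ => ?_
    rw [Finset.sum_mul]
    exact Finset.sum_congr rfl fun i _ => (Finset.mul_sum _ _ _).symm

lemma myExistsIntertwiner {G : Type} [Group G] [Fintype G] (ρ ρ' : Representation ℂ G V)
    (hirr : Nontrivial V ∧
      ∀ p : Submodule ℂ V, (∀ (h : G), ∀ v ∈ p, ρ h v ∈ p) → p = ⊥ ∨ p = ⊤)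
    (hchar : ∀ g : G, trace ℂ V (ρ' g) = trace ℂ V (ρ g)) :
    ∃ T : V →ₗ[ℂ] V, T ≠ 0 ∧ ∀ g : G, T * ρ g = ρ' g * T := by
  haveI := hirr.1
  classical
  set d := Module.finrank ℂ V with hd
  have hd0 : (d : ℂ) ≠ 0 := Nat.cast_ne_zero.2 (Module.finrank_pos (R := ℂ) (M := V)).ne'
  set b := Module.finBasis ℂ V with hb
  have key : ∀ i j : Fin d,
      b.coord i ((∑ g : G, ρ g⁻¹ * (b.coord j).smulRight (b i) * ρ g) (b j))
        = if i = j then (Fintype.card G : ℂ) * (d : ℂ)⁻¹ else 0 := by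
    intro i j
    obtain ⟨c, hc⟩ := mySchur ρ hirr (∑ g : G, ρ g⁻¹ * (b.coord j).smulRight (b i) * ρ g)
      (fun g => (myIntertwine ρ ρ _ g).symm)
    have htr : trace ℂ V (∑ g : G, ρ g⁻¹ * (b.coord j).smulRight (b i) * ρ g)
        = (Fintype.card G : ℂ) * trace ℂ V ((b.coord j).smulRight (b i)) := by
      rw [map_sum, Finset.sum_congr rfl (fun g _ => by
        rw [trace_mul_comm, ← mul_assoc, ← map_mul, mul_inv_cancel, map_one, one_mul]),
        Finset.sum_const, Finset.card_univ, nsmul_eq_mul]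
    have htrf : trace ℂ V ((b.coord j).smulRight (b i)) = if i = j then 1 else 0 := by
      rw [myTrace_eq_sum_coord b]
      simp only [Module.Basis.coord_apply, LinearMap.smulRight_apply, smul_eq_mul]
      have hterm : ∀ x, (b.repr ((b.repr (b x)) j • b i)) x
          = if x = j then (if i = x then (1:ℂ) else 0) else 0 := by
        intro x
        rw [Module.Basis.repr_self, Finsupp.single_apply]
        by_cases hxj : x = j
        · simp [hxj, Module.Basis.repr_self, Finsupp.single_apply]
        · simp [hxj]
      rw [Finset.sum_congr rfl fun x _ => hterm x, Finset.sum_ite_eq' Finset.univ j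
        (fun x => if i = x then (1:ℂ) else 0)]
      simp
    have hcd : c = if i = j then (Fintype.card G : ℂ) * (d : ℂ)⁻¹ else 0 := by
      have h := congrArg (trace ℂ V) hc
      rw [htr, htrf, map_smul, trace_one, smul_eq_mul] at h
      by_cases hij : i = j
      · simp only [hij, if_true] at h ⊢
        rw [← div_eq_mul_inv, eq_div_iff hd0]
        rw [mul_one] at h
        exact h.symm
      · simp only [hij, if_false] at h ⊢
        rw [mul_zero] at h
        rcases mul_eq_zero.1 h.symm with h' | h'
        · exact h'
        · exact absurd h' hd0
    rw [hc, hcd]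
    by_cases hij : i = j
    · subst hij
      simp [Module.Basis.coord_apply, Module.Basis.repr_self]
    · simp [hij, Module.Basis.coord_apply, Module.Basis.repr_self, Finsupp.single_apply, Ne.symm hij]
  have sumρ : ∑ g : G, trace ℂ V (ρ g⁻¹) * trace ℂ V (ρ g) = (Fintype.card G : ℂ) := by
    rw [← mySumCoord ρ ρ b, Finset.sum_congr rfl
      (fun i _ => Finset.sum_congr rfl fun j _ => key i j)]
    simp only [Finset.sum_ite_eq, Finset.mem_univ, if_true]
    rw [Finset.sum_const, Finset.card_univ, Fintype.card_fin, nsmul_eq_mul]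
    field_simp
  have sumρ' : ∑ g : G, trace ℂ V (ρ' g⁻¹) * trace ℂ V (ρ g) = (Fintype.card G : ℂ) := by
    rw [← sumρ]; exact Finset.sum_congr rfl fun g _ => by rw [hchar g⁻¹]
  have hex : ∃ i j : Fin d, (∑ g : G, ρ' g⁻¹ * (b.coord j).smulRight (b i) * ρ g) ≠ 0 := by
    by_contra hno
    push_neg at hno
    have h0 := mySumCoord ρ ρ' b
    rw [sumρ'] at h0
    simp only [hno, LinearMap.zero_apply, map_zero, Finset.sum_const_zero] at h0
    exact absurd h0.symm (Nat.cast_ne_zero.2 Fintype.card_ne_zero)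
  obtain ⟨i, j, hT⟩ := hex
  exact ⟨_, hT, fun g => (myIntertwine ρ ρ' _ g).symm⟩

lemma myExtend {K : Type} [Group K] (H : Subgroup K) [hN : H.Normal]
    {V : Type} [AddCommGroup V] [Module ℂ V]
    (ρ : Representation ℂ H V) (k₀ : K) (n : ℕ)
    (horder : ((k₀ : K ⧸ H)) ^ n = 1)
    (hmodeq : ∀ a b : ℕ, ((k₀ : K ⧸ H)) ^ a = ((k₀ : K ⧸ H)) ^ b → a % n = b % n)
    (hgen : ∀ k : K, ∃ m : ℕ, ((k₀ : K ⧸ H)) ^ m = (k : K ⧸ H))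
    (U : V →ₗ[ℂ] V)
    (hU1 : ∀ h : H, U * ρ h = ρ (MulAut.conjNormal k₀ h) * U)
    (he : k₀ ^ n ∈ H)
    (hU2 : U ^ n = ρ ⟨k₀ ^ n, he⟩) :
    ∃ σ : Representation ℂ K V, ∀ h : H, σ (h : K) = ρ h := by
  classical
  have hmem : ∀ (m : ℕ) (k : K), ((k₀ : K ⧸ H)) ^ m = (k : K ⧸ H) → (k₀ ^ m)⁻¹ * k ∈ H := by
    intro m k hq
    refine QuotientGroup.eq.mp ?_
    rw [QuotientGroup.mk_pow]
    exact hq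
  let E : ℕ → K → (V →ₗ[ℂ] V) := fun m k =>
    if hq : ((k₀ : K ⧸ H)) ^ m = (k : K ⧸ H) then U ^ m * ρ ⟨(k₀ ^ m)⁻¹ * k, hmem m k hq⟩ else 0
  have hE : ∀ (m : ℕ) (k : K) (hq : ((k₀ : K ⧸ H)) ^ m = (k : K ⧸ H)),
      E m k = U ^ m * ρ ⟨(k₀ ^ m)⁻¹ * k, hmem m k hq⟩ := fun m k hq => dif_pos hq
  have hpow1 : ∀ m : ℕ, ((k₀ : K ⧸ H)) ^ (m + n) = ((k₀ : K ⧸ H)) ^ m := by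
    intro m; rw [pow_add, horder, mul_one]
  have Estep : ∀ (m : ℕ) (k : K), ((k₀ : K ⧸ H)) ^ m = (k : K ⧸ H) → E (m + n) k = E m k := by
    intro m k hq
    have hq' : ((k₀ : K ⧸ H)) ^ (m + n) = (k : K ⧸ H) := (hpow1 m).trans hq
    rw [hE _ _ hq', hE _ _ hq, pow_add, hU2, mul_assoc, ← map_mul]
    congr 1
    apply congrArg
    apply Subtype.ext
    simp only [MulMemClass.coe_mul]
    rw [pow_add]
    group
  have Eper : ∀ (t m : ℕ) (k : K), ((k₀ : K ⧸ H)) ^ m = (k : K ⧸ H) → E (m + t * n) k = E m k := by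
    intro t
    induction t with
    | zero => intro m k _; simp
    | succ t ih =>
      intro m k hq
      have h1 : m + (t + 1) * n = (m + t * n) + n := by ring
      have hq2 : ((k₀ : K ⧸ H)) ^ (m + t * n) = (k : K ⧸ H) := by
        rw [pow_add, pow_mul', horder, one_pow, mul_one, hq]
      rw [h1, Estep _ _ hq2, ih m k hq]
  have Emod : ∀ (m : ℕ) (k : K), ((k₀ : K ⧸ H)) ^ m = (k : K ⧸ H) → E m k = E (m % n) k := by
    intro m k hq
    have hqm : ((k₀ : K ⧸ H)) ^ (m % n) = (k : K ⧸ H) := by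
      rw [← hq]
      conv_rhs => rw [← Nat.mod_add_div' m n]
      rw [pow_add, pow_mul', horder, one_pow, mul_one]
    calc E m k = E (m % n + m / n * n) k := by rw [Nat.mod_add_div']
    _ = E (m % n) k := Eper _ _ _ hqm
  have Ewd : ∀ (a b : ℕ) (k : K), ((k₀ : K ⧸ H)) ^ a = (k : K ⧸ H) →
      ((k₀ : K ⧸ H)) ^ b = (k : K ⧸ H) → E a k = E b k := by
    intro a b k hqa hqb
    rw [Emod a k hqa, Emod b k hqb, hmodeq a b (hqa.trans hqb.symm)]
  have step : ∀ h : H, ρ h * U = U * ρ (MulAut.conjNormal k₀⁻¹ h) := by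
    intro h
    rw [hU1 (MulAut.conjNormal k₀⁻¹ h)]
    have : MulAut.conjNormal k₀ (MulAut.conjNormal k₀⁻¹ h) = h := by
      rw [← MulAut.mul_apply, ← map_mul, mul_inv_cancel, map_one, MulAut.one_apply]
    rw [this]
  have Ccomm : ∀ (m : ℕ) (h : H), ρ h * U ^ m = U ^ m * ρ (MulAut.conjNormal (k₀ ^ m)⁻¹ h) := by
    intro m
    induction m with
    | zero => intro h; simp
    | succ m ih =>
      intro h
      rw [pow_succ, ← mul_assoc, ih h, mul_assoc, step, ← mul_assoc, ← pow_succ]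
      congr 2
      rw [← MulAut.mul_apply, ← map_mul, ← mul_inv_rev, ← pow_succ]
  have hvalid : ∀ k : K, ((k₀ : K ⧸ H)) ^ (hgen k).choose = (k : K ⧸ H) :=
    fun k => (hgen k).choose_spec
  refine ⟨⟨⟨fun k => E (hgen k).choose k, ?_⟩, ?_⟩, ?_⟩
  · show E (hgen 1).choose 1 = 1
    have hq0 : ((k₀ : K ⧸ H)) ^ 0 = ((1 : K) : K ⧸ H) := by simp
    rw [Ewd _ 0 1 (hvalid 1) hq0, hE 0 1 hq0]
    have h1 : (⟨(k₀ ^ 0)⁻¹ * 1, hmem 0 1 hq0⟩ : H) = 1 := by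
      apply Subtype.ext; simp
    rw [h1, map_one, pow_zero, one_mul]
  · intro k k'
    show E (hgen (k * k')).choose (k * k') = E (hgen k).choose k * E (hgen k').choose k'
    set a := (hgen k).choose with ha
    set b := (hgen k').choose with hb
    have hab : ((k₀ : K ⧸ H)) ^ (a + b) = ((k * k' : K) : K ⧸ H) := by
      rw [pow_add, hvalid k, hvalid k', QuotientGroup.mk_mul]
    rw [Ewd _ (a + b) (k * k') (hvalid _) hab, hE (a + b) _ hab,
      hE a k (hvalid k), hE b k' (hvalid k')]
    rw [mul_assoc, ← mul_assoc (ρ _), Ccomm b, mul_assoc, ← mul_assoc (U ^ a), ← pow_add,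
      ← map_mul]
    congr 1
    apply congrArg
    apply Subtype.ext
    simp only [MulMemClass.coe_mul, MulAut.conjNormal_apply]
    rw [pow_add]
    group
  · intro h
    show E (hgen (h : K)).choose (h : K) = ρ h
    have hq0 : ((k₀ : K ⧸ H)) ^ 0 = ((h : K) : K ⧸ H) := by
      rw [pow_zero]; exact ((QuotientGroup.eq_one_iff _).mpr h.2).symm
    rw [Ewd _ 0 _ (hvalid _) hq0, hE 0 _ hq0]
    have h1 : (⟨(k₀ ^ 0)⁻¹ * (h : K), hmem 0 _ hq0⟩ : H) = h := by
      apply Subtype.ext; simp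
    rw [h1, pow_zero, one_mul]

end ExtensionAux


/-- Let `H` be a normal subgroup of a finite group `K` with `K/H` cyclic, and let `V` be an
irreducible complex representation of `H` whose character is `K`-invariant.  Then `V`
extends to a representation of `K` (an extension on the same underlying space, which is
the same as a `K`-representation `W` with `res_H W ≅ V`). -/
theorem extension_cyclic_quotient {K : Type} [Group K] [Finite K]
    (H : Subgroup K) [hN : H.Normal] (hcyc : IsCyclic (K ⧸ H))
    {V : Type} [AddCommGroup V] [Module ℂ V] [FiniteDimensional ℂ V]
    (ρ : Representation ℂ H V)
    (hirr : Nontrivial V ∧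
      ∀ p : Submodule ℂ V, (∀ (h : H), ∀ v ∈ p, ρ h v ∈ p) → p = ⊥ ∨ p = ⊤)
    (hinv : ∀ (k : K) (h : H),
      LinearMap.trace ℂ V (ρ ⟨k⁻¹ * (h : K) * k, by simpa using hN.conj_mem h h.2 k⁻¹⟩) =
        LinearMap.trace ℂ V (ρ h)) :
    ∃ σ : Representation ℂ K V, ∀ h : H, σ (h : K) = ρ h := by
  classical
  haveI : Fintype H := Fintype.ofFinite H
  haveI := hirr.1
  obtain ⟨g, hg⟩ := hcyc
  obtain ⟨k₀, hk₀⟩ := QuotientGroup.mk'_surjective H g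
  have hk₀' : ((k₀ : K ⧸ H)) = g := hk₀
  have hgen : ∀ k : K, ∃ m : ℕ, ((k₀ : K ⧸ H)) ^ m = (k : K ⧸ H) := by
    intro k
    have h1 : ((k : K ⧸ H)) ∈ Subgroup.zpowers ((k₀ : K ⧸ H)) := by
      rw [hk₀']; exact hg _
    exact mem_powers_iff_mem_zpowers.mpr h1
  set n := orderOf ((k₀ : K ⧸ H)) with hn_def
  have hn : 0 < n := orderOf_pos _
  have horder : ((k₀ : K ⧸ H)) ^ n = 1 := pow_orderOf_eq_one _
  have hmodeq : ∀ a b : ℕ, ((k₀ : K ⧸ H)) ^ a = ((k₀ : K ⧸ H)) ^ b → a % n = b % n :=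
    fun a b h => pow_eq_pow_iff_modEq.mp h
  have he : k₀ ^ n ∈ H := by
    rw [← QuotientGroup.eq_one_iff, QuotientGroup.mk_pow]
    exact horder
  set ρ' : Representation ℂ H V := ρ.comp (MulAut.conjNormal k₀).toMonoidHom with hρ'
  have hρ'app : ∀ h : H, ρ' h = ρ (MulAut.conjNormal k₀ h) := fun _ => rfl
  have hchar : ∀ h : H, trace ℂ V (ρ' h) = trace ℂ V (ρ h) := by
    intro h
    have h1 := hinv k₀⁻¹ h
    have h2 : (⟨(k₀⁻¹)⁻¹ * (h : K) * k₀⁻¹, by simpa using hN.conj_mem h h.2 k₀⁻¹⁻¹⟩ : H)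
        = MulAut.conjNormal k₀ h := by
      apply Subtype.ext
      simp [MulAut.conjNormal_apply]
    rw [hρ'app, ← h2]
    convert h1 using 3
  obtain ⟨T, hT0, hT⟩ := myExistsIntertwiner ρ ρ' hirr hchar
  have hinj : Function.Injective T := by
    rw [← LinearMap.ker_eq_bot]
    rcases hirr.2 (LinearMap.ker T) (fun h v hv => by
      rw [LinearMap.mem_ker] at hv ⊢
      have := LinearMap.congr_fun (hT h) v
      simp only [Module.End.mul_apply] at this
      rw [this, hv, map_zero]) with h | h
    · exact h
    · exact absurd (LinearMap.ker_eq_top.mp h) hT0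
  have hinjn : ∀ m : ℕ, Function.Injective ((T ^ m : V →ₗ[ℂ] V)) := by
    intro m
    induction m with
    | zero => intro x y hxy; simpa using hxy
    | succ m ih =>
      intro x y hxy
      rw [pow_succ] at hxy
      simp only [Module.End.mul_apply] at hxy
      exact hinj (ih hxy)
  have hTn : ∀ (m : ℕ) (h : H), T ^ m * ρ h = ρ (MulAut.conjNormal (k₀ ^ m) h) * T ^ m := by
    intro m
    induction m with
    | zero => intro h; simp
    | succ m ih =>
      intro h
      rw [pow_succ, mul_assoc, hT h, hρ'app, ← mul_assoc, ih, mul_assoc, ← pow_succ]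
      congr 2
      rw [← MulAut.mul_apply, ← map_mul, ← pow_succ]
  set e : H := ⟨k₀ ^ n, he⟩ with he_def
  have hcNe : ∀ h : H, MulAut.conjNormal (k₀ ^ n) h = e * h * e⁻¹ := by
    intro h
    apply Subtype.ext
    simp only [MulAut.conjNormal_apply, he_def, MulMemClass.coe_mul, InvMemClass.coe_inv]
  have hS : ∀ h : H, (ρ e⁻¹ * T ^ n) * ρ h = ρ h * (ρ e⁻¹ * T ^ n) := by
    intro h
    rw [mul_assoc, hTn n h, hcNe, ← mul_assoc, ← map_mul]
    rw [show e⁻¹ * (e * h * e⁻¹) = h * e⁻¹ by group, map_mul, mul_assoc]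
  obtain ⟨c, hc⟩ := mySchur ρ hirr _ hS
  have hTe : T ^ n = c • ρ e := by
    calc T ^ n = ρ e * (ρ e⁻¹ * T ^ n) := by
          rw [← mul_assoc, ← map_mul, mul_inv_cancel, map_one, one_mul]
    _ = ρ e * (c • 1) := by rw [hc]
    _ = c • ρ e := by rw [mul_smul_comm, mul_one]
  have hc0 : c ≠ 0 := by
    intro h0
    rw [h0, zero_smul] at hTe
    obtain ⟨v, hv⟩ := exists_ne (0 : V)
    apply hv
    apply hinjn n
    rw [hTe]
    simp
  obtain ⟨μ, hμ⟩ := IsAlgClosed.exists_pow_nat_eq c hn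
  have hμ0 : μ ≠ 0 := by
    intro h0
    rw [h0, zero_pow hn.ne'] at hμ
    exact hc0 hμ.symm
  set U : V →ₗ[ℂ] V := μ⁻¹ • T with hU_def
  have hU1 : ∀ h : H, U * ρ h = ρ (MulAut.conjNormal k₀ h) * U := by
    intro h
    rw [hU_def, smul_mul_assoc, mul_smul_comm, hT h, hρ'app]
  have hU2 : U ^ n = ρ e := by
    rw [hU_def, smul_pow, hTe, smul_smul, inv_pow, hμ, inv_mul_cancel₀ hc0, one_smul]
  exact myExtend H ρ k₀ n horder hmodeq hgen U hU1 he hU2
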